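/- Let n ≥ 13 be odd with an integer r satisfying r^2 + r + 1 ≡ 0 (mod n), and let S_0 = {b, ab, a^{r+1}b} ⊆ D_{2n}. Then the automorphism σ_{r,1} of D_{2n} (a ↦ a^r, b ↦ ab) fixes S_0 setwise and has order 3; moreover Aut(D_{2n}, S_0) = ⟨σ_{r,1}⟩ ≅ Z_3. -/

import Mathlib

open DihedralGroup

private lemma dihedral_r_pow {n : ℕ} [NeZero n] (k : ZMod n) (m : ℕ) :
    (r k : DihedralGroup n) ^ m = r (k * (m : ZMod n)) := by
  induction m with
  | zero => rw [pow_zero, Nat.cast_zero, mul_zero, DihedralGroup.one_def]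
  | succ m ih =>
    rw [pow_succ, ih, r_mul_r]
    congr 1
    push_cast
    ring

private lemma dihedral_aut_r {n : ℕ} [NeZero n] (ψ : MulAut (DihedralGroup n)) (a b : ZMod n)
    (h0 : ψ (sr 0) = sr a) (h1 : ψ (sr (-1)) = sr b) (i : ZMod n) :
    ψ (r i) = r ((a - b) * i) := by
  have hv : ((i.val : ℕ) : ZMod n) = i := by
    simp [ZMod.natCast_val, ZMod.cast_id]
  have hr1 : ψ (r 1) = r (a - b) := by
    have h : (r 1 : DihedralGroup n) = sr (-1) * sr 0 := by
      rw [sr_mul_sr]; norm_num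
    rw [h, map_mul, h0, h1, sr_mul_sr]
  have hi : (r i : DihedralGroup n) = (r 1) ^ i.val := by
    rw [r_one_pow, hv]
  rw [hi, map_pow, hr1, dihedral_r_pow, hv]

private lemma dihedral_aut_sr {n : ℕ} [NeZero n] (ψ : MulAut (DihedralGroup n)) (a b : ZMod n)
    (h0 : ψ (sr 0) = sr a) (h1 : ψ (sr (-1)) = sr b) (i : ZMod n) :
    ψ (sr i) = sr (a + (a - b) * i) := by
  have h : (sr i : DihedralGroup n) = sr 0 * r i := by rw [sr_mul_r, zero_add]
  rw [h, map_mul, h0, dihedral_aut_r ψ a b h0 h1, sr_mul_r]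

private lemma dihedral_aut_ext {n : ℕ} [NeZero n] (ψ χ : MulAut (DihedralGroup n))
    (h0 : ψ (sr 0) = χ (sr 0)) (h1 : ψ (sr (-1)) = χ (sr (-1))) : ψ = χ := by
  have hr1 : ψ (r 1) = χ (r 1) := by
    have h : (r 1 : DihedralGroup n) = sr (-1) * sr 0 := by
      rw [sr_mul_sr]; norm_num
    rw [h, map_mul, map_mul, h0, h1]
  have hr : ∀ i : ZMod n, ψ (r i) = χ (r i) := by
    intro i
    have hv : ((i.val : ℕ) : ZMod n) = i := by
      simp [ZMod.natCast_val, ZMod.cast_id]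
    have hi : (r i : DihedralGroup n) = (r 1) ^ i.val := by
      rw [r_one_pow, hv]
    rw [hi, map_pow, map_pow, hr1]
  ext x
  cases x with
  | r i => exact hr i
  | sr i =>
    have h : (sr i : DihedralGroup n) = sr 0 * r i := by rw [sr_mul_r, zero_add]
    rw [h, map_mul, map_mul, h0, hr]

theorem dihedral_cubic_aut (n : ℕ) (hn : 13 ≤ n) (hodd : Odd n)
    (u : ZMod n) (hu : u ^ 2 + u + 1 = 0)
    (S₀ : Set (DihedralGroup n))
    (hS₀ : S₀ = {DihedralGroup.sr 0, DihedralGroup.r 1 * DihedralGroup.sr 0,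
      DihedralGroup.r (u + 1) * DihedralGroup.sr 0})
    (φ : MulAut (DihedralGroup n))
    (hφr : ∀ i : ZMod n, φ (DihedralGroup.r i) = DihedralGroup.r (u * i))
    (hφs : ∀ j : ZMod n, φ (DihedralGroup.r j * DihedralGroup.sr 0) =
      DihedralGroup.r (u * j + 1) * DihedralGroup.sr 0) :
    ⇑φ '' S₀ = S₀ ∧ orderOf φ = 3 ∧
      ∀ ψ : MulAut (DihedralGroup n), ⇑ψ '' S₀ = S₀ → ψ ∈ Subgroup.zpowers φ := by
  haveI : NeZero n := ⟨by omega⟩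
  haveI : Fact (1 < n) := ⟨by omega⟩
  subst hS₀
  have hz1 : (1 : ZMod n) ≠ 0 := one_ne_zero
  have h3 : (3 : ZMod n) ≠ 0 := by
    intro h
    have hd : n ∣ 3 := by
      have := (ZMod.natCast_eq_zero_iff 3 n).mp (by exact_mod_cast h)
      exact this
    have := Nat.le_of_dvd (by norm_num) hd
    omega
  have h01 : (0 : ZMod n) ≠ -1 := by
    intro h; exact hz1 (by linear_combination h)
  have h0c : (0 : ZMod n) ≠ -(u + 1) := by
    intro h; exact hz1 (by linear_combination hu - u * h)
  have h1c : (-1 : ZMod n) ≠ -(u + 1) := by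
    intro h; exact hz1 (by linear_combination hu - (u + 1) * h)
  have e1 : (r 1 * sr 0 : DihedralGroup n) = sr (-1) := by rw [r_mul_sr, zero_sub]
  have e2 : (r (u + 1) * sr 0 : DihedralGroup n) = sr (-(u + 1)) := by rw [r_mul_sr, zero_sub]
  rw [e1, e2]
  have hφ0 : φ (sr 0) = sr (-1) := by
    have h : (sr 0 : DihedralGroup n) = r 0 * sr 0 := by rw [r_mul_sr, sub_zero]
    rw [h, hφs, mul_zero, zero_add, e1]
  have hφ1 : φ (sr (-1)) = sr (-(u + 1)) := by
    rw [← e1, hφs, mul_one, e2]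
  have φsr : ∀ i : ZMod n, φ (sr i) = sr (u * i - 1) := by
    intro i
    rw [dihedral_aut_sr φ (-1) (-(u + 1)) hφ0 hφ1 i]
    congr 1; ring
  have hφ2 : φ (sr (-(u + 1))) = sr 0 := by
    rw [φsr]; congr 1; linear_combination -hu
  refine ⟨?_, ?_, ?_⟩
  · rw [Set.image_insert_eq, Set.image_insert_eq, Set.image_singleton, hφ0, hφ1, hφ2]
    ext x
    simp only [Set.mem_insert_iff, Set.mem_singleton_iff]
    tauto
  · haveI : Fact (Nat.Prime 3) := ⟨by norm_num⟩
    have hφ3 : φ ^ 3 = 1 := by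
      ext x
      have e : (φ ^ 3) x = φ (φ (φ x)) := by
        rw [pow_succ, pow_succ, pow_one, MulAut.mul_apply, MulAut.mul_apply]
      rw [e]
      show _ = x
      cases x with
      | r i =>
        rw [hφr, hφr, hφr]
        congr 1
        linear_combination ((u - 1) * i) * hu
      | sr i =>
        rw [φsr, φsr, φsr]
        congr 1
        linear_combination ((u - 1) * i - 1) * hu
    have hφne : φ ≠ 1 := by
      intro h
      have h' := hφ0
      rw [h] at h'
      have : (0 : ZMod n) = -1 := by
        have : (sr 0 : DihedralGroup n) = sr (-1) := h'
        simpa [DihedralGroup.sr.injEq] using this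
      exact h01 this
    exact orderOf_eq_prime hφ3 hφne
  · intro ψ hψ
    have hmem : ∀ x ∈ ({sr 0, sr (-1), sr (-(u + 1))} : Set (DihedralGroup n)),
        ψ x ∈ ({sr 0, sr (-1), sr (-(u + 1))} : Set (DihedralGroup n)) := by
      intro x hx
      rw [← hψ]
      exact Set.mem_image_of_mem ψ hx
    have memA := hmem (sr 0) (by left; rfl)
    have memB := hmem (sr (-1)) (by right; left; rfl)
    have memC := hmem (sr (-(u + 1))) (by right; right; rfl)
    simp only [Set.mem_insert_iff, Set.mem_singleton_iff] at memA memB memC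
    have inj := ψ.injective
    -- generic consequence of two values equal
    have swap0 : ∀ {x y : ZMod n}, ψ (sr x) = ψ (sr y) → x = y := by
      intro x y h
      have := inj h
      simpa [DihedralGroup.sr.injEq] using this
    rcases memA with ha | ha | ha <;> rcases memB with hb | hb | hb
    -- (0,0)
    · exact absurd (swap0 (ha.trans hb.symm)) h01
    -- (0,-1): ψ = 1
    · have hid : ψ = 1 := dihedral_aut_ext ψ 1 (by rw [ha]; rfl) (by rw [hb]; rfl)
      rw [hid]; exact Subgroup.one_mem _
    -- (0,-(u+1)): bad
    · have hc := dihedral_aut_sr ψ 0 (-(u + 1)) ha hb (-(u + 1))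
      rcases memC with hC | hC | hC
      · exact absurd (swap0 (hC.trans ha.symm)).symm h0c
      · have harg : (0 : ZMod n) + (0 - -(u + 1)) * -(u + 1) = -1 := by
          have h := hc.symm.trans hC
          simpa [DihedralGroup.sr.injEq] using h
        exact absurd (by linear_combination (u + 3) * hu + (u + 2) * harg : (3 : ZMod n) = 0) h3
      · exact absurd (swap0 (hC.trans hb.symm)) (fun e => h1c e.symm)
    -- (-1,0): bad
    · have hc := dihedral_aut_sr ψ (-1) 0 ha hb (-(u + 1))
      rcases memC with hC | hC | hC
      · exact absurd (swap0 (hC.trans hb.symm)) (fun e => h1c e.symm)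
      · exact absurd (swap0 (hC.trans ha.symm)).symm h0c
      · have harg : (-1 : ZMod n) + (-1 - 0) * -(u + 1) = -(u + 1) := by
          have h := hc.symm.trans hC
          simpa [DihedralGroup.sr.injEq] using h
        exact absurd (by linear_combination 4 * hu - (2 * u + 1) * harg : (3 : ZMod n) = 0) h3
    -- (-1,-1)
    · exact absurd (swap0 (ha.trans hb.symm)) h01
    -- (-1,-(u+1)): ψ = φ
    · have hid : ψ = φ := dihedral_aut_ext ψ φ (ha.trans hφ0.symm) (hb.trans hφ1.symm)
      rw [hid]; exact Subgroup.mem_zpowers φ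
    -- (-(u+1),0): ψ = φ²
    · have p2 : ∀ x, (φ ^ 2) x = φ (φ x) := by
        intro x; rw [pow_succ, pow_one, MulAut.mul_apply]
      have hid : ψ = φ ^ 2 := by
        refine dihedral_aut_ext ψ (φ ^ 2) ?_ ?_
        · rw [p2, hφ0, hφ1]; exact ha
        · rw [p2, hφ1, hφ2]; exact hb
      rw [hid]; exact (Subgroup.zpowers φ).pow_mem (Subgroup.mem_zpowers φ) 2
    -- (-(u+1),-1): bad
    · have hc := dihedral_aut_sr ψ (-(u + 1)) (-1) ha hb (-(u + 1))
      rcases memC with hC | hC | hC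
      · have harg : -(u + 1) + (-(u + 1) - -1) * -(u + 1) = (0 : ZMod n) := by
          have h := hc.symm.trans hC
          simpa [DihedralGroup.sr.injEq] using h
        exact absurd (by linear_combination (u - 1) * harg - (u - 2) * hu : (3 : ZMod n) = 0) h3
      · exact absurd (swap0 (hC.trans hb.symm)) (fun e => h1c e.symm)
      · exact absurd (swap0 (hC.trans ha.symm)) (fun e => h0c e.symm)
    -- (-(u+1),-(u+1))
    · exact absurd (swap0 (ha.trans hb.symm)) h01
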